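/- Let L = (0,1) \ C be the Cantor string, D = log 2 / log 3, p = 2π / log 3, and g = 1/6. Then for every ε with 0 < ε ≤ 1/6, the symmetric partial sums ∑_{n=−N}^{N} (1/(D + i n p) − 1/(D − 1 + i n p)) · (ε/g)^{1 − D − i n p} converge as N → ∞, and V_L(ε) = (1/(3 log 3)) · lim_{N→∞} ∑_{n=−N}^{N} (1/(D + i n p) − 1/(D − 1 + i n p)) (ε/g)^{1 − D − i n p} − 2ε, where V_L(ε) is the Lebesgue measure of {x ∈ L : dist(x, ∂L) ≤ ε} and (ε/g)^z := exp(z · log(ε/g)) with the real logarithm. -/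

import Mathlib

open MeasureTheory Metric Filter Set
open scoped Pointwise Real

set_option linter.unusedSectionVars false
set_option linter.unusedVariables false
set_option maxHeartbeats 1000000



section CantorStruct
variable {C : Set ℝ} (hCne : C.Nonempty) (hCc : IsCompact C)
  (hC : C = (fun x : ℝ => x / 3) '' C ∪ (fun x : ℝ => x / 3 + 2 / 3) '' C)

include hCne hCc hC

lemma cantor_basic : (1:ℝ) ∈ C ∧ C ⊆ Set.Icc 0 1 ∧ (0:ℝ) ∈ C := by
  have hb : sSup C ∈ C := hCc.sSup_mem hCne
  have ha : sInf C ∈ C := hCc.sInf_mem hCne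
  have hbdd : BddAbove C := hCc.bddAbove
  have hbddb : BddBelow C := hCc.bddBelow
  have hc1 : Continuous (fun x : ℝ => x / 3) := continuous_id.div_const 3
  have hc2 : Continuous (fun x : ℝ => x / 3 + 2/3) := hc1.add continuous_const
  have h1 : Monotone (fun x : ℝ => x / 3) := fun a b hab => by dsimp; linarith
  have h2 : Monotone (fun x : ℝ => x / 3 + 2/3) := fun a b hab => by dsimp; linarith
  have e1 := (h1.map_csSup_of_continuousAt hc1.continuousAt hCne hbdd).symm
  have e2 := (h2.map_csSup_of_continuousAt hc2.continuousAt hCne hbdd).symm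
  have f1 := (h1.map_csInf_of_continuousAt hc1.continuousAt hCne hbddb).symm
  have f2 := (h2.map_csInf_of_continuousAt hc2.continuousAt hCne hbddb).symm
  have hsup : sSup C = sSup C / 3 + 2/3 := by
    conv_lhs => rw [hC]
    rw [csSup_union ((hCc.image hc1).bddAbove) (hCne.image _)
      ((hCc.image hc2).bddAbove) (hCne.image _), e1, e2]
    rw [sup_eq_right.2 (by linarith)]
  have hinf : sInf C = sInf C / 3 := by
    conv_lhs => rw [hC]
    rw [csInf_union ((hCc.image hc1).bddBelow) (hCne.image _)
      ((hCc.image hc2).bddBelow) (hCne.image _), f1, f2]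
    rw [inf_eq_left.2 (by linarith)]
  have hb1 : sSup C = 1 := by linarith
  have ha0 : sInf C = 0 := by linarith
  refine ⟨hb1 ▸ hb, fun x hx => ⟨ha0 ▸ csInf_le hbddb hx, hb1 ▸ le_csSup hbdd hx⟩, ha0 ▸ ha⟩

end CantorStruct



section CantorStruct
variable {C : Set ℝ} (hCne : C.Nonempty) (hCc : IsCompact C)
  (hC : C = (fun x : ℝ => x / 3) '' C ∪ (fun x : ℝ => x / 3 + 2 / 3) '' C)
  (hsub : C ⊆ Set.Icc 0 1)

include hC hsub

lemma cantor_div3 : ∀ y ∈ C, y/3 ∈ C := by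
  intro y hy
  rw [hC]; exact Or.inl ⟨y, hy, rfl⟩

lemma cantor_div3' : ∀ y ∈ C, y/3 + 2/3 ∈ C := by
  intro y hy
  rw [hC]; exact Or.inr ⟨y, hy, rfl⟩

lemma cantor_gap : ∀ x ∈ C, x ≤ 1/3 ∨ 2/3 ≤ x := by
  intro x hx
  rw [hC] at hx
  rcases hx with ⟨y, hy, rfl⟩ | ⟨y, hy, rfl⟩
  · left; have := (hsub hy).2; dsimp; linarith
  · right; have := (hsub hy).1; dsimp; linarith

lemma cantor_mul3 : ∀ x ∈ C, x ≤ 1/3 → 3*x ∈ C := by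
  intro x hx hle
  rw [hC] at hx
  rcases hx with ⟨y, hy, rfl⟩ | ⟨y, hy, rfl⟩
  · have : 3 * (y/3) = y := by ring
    rwa [this]
  · exfalso; have := (hsub hy).1; dsimp at hle; linarith

lemma cantor_mul3' : ∀ x ∈ C, 2/3 ≤ x → 3*x - 2 ∈ C := by
  intro x hx hle
  rw [hC] at hx
  rcases hx with ⟨y, hy, rfl⟩ | ⟨y, hy, rfl⟩
  · exfalso; have := (hsub hy).2; dsimp at hle; linarith
  · have : 3 * (y/3 + 2/3) - 2 = y := by ring
    rwa [this]

end CantorStruct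

section CantorVol
variable {C : Set ℝ} (hCc : IsCompact C)
  (hC : C = (fun x : ℝ => x / 3) '' C ∪ (fun x : ℝ => x / 3 + 2 / 3) '' C)

include hCc hC

lemma cantor_vol : volume C = 0 := by
  have himg1 : (fun x : ℝ => x / 3) '' C = (3⁻¹ : ℝ) • C := by
    ext x; simp [Set.mem_smul_set, div_eq_inv_mul, eq_comm]
  have himg2 : (fun x : ℝ => x / 3 + 2/3) '' C = (2/3 : ℝ) +ᵥ ((3⁻¹ : ℝ) • C) := by
    rw [← himg1]; ext x
    simp only [Set.mem_vadd_set, Set.mem_image, vadd_eq_add]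
    constructor
    · rintro ⟨y, hy, rfl⟩; exact ⟨y/3, ⟨y, hy, rfl⟩, by ring⟩
    · rintro ⟨z, ⟨y, hy, rfl⟩, rfl⟩; exact ⟨y, hy, by ring⟩
  have hsmul : volume ((3⁻¹ : ℝ) • C) = ENNReal.ofReal (3⁻¹) * volume C := by
    rw [Measure.addHaar_smul_of_nonneg volume (by norm_num : (0:ℝ) ≤ 3⁻¹) C]
    norm_num
  have hlt : volume C < ⊤ := hCc.measure_lt_top
  have hle : volume C ≤ ENNReal.ofReal (3⁻¹) * volume C + ENNReal.ofReal (3⁻¹) * volume C := by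
    conv_lhs => rw [hC]
    refine le_trans (measure_union_le _ _) ?_
    rw [himg1, himg2, hsmul, measure_vadd, hsmul]
  by_contra h
  have hpos : (0:ℝ) < (volume C).toReal := ENNReal.toReal_pos h hlt.ne
  have := ENNReal.toReal_mono (by finiteness) hle
  rw [ENNReal.toReal_add (by finiteness) (by finiteness), ENNReal.toReal_mul, ENNReal.toReal_ofReal (by norm_num)] at this
  nlinarith
end CantorVol



lemma frontier_L {C L : Set ℝ} (hCc : IsCompact C)
    (hsub : C ⊆ Set.Icc 0 1) (h0 : (0:ℝ) ∈ C) (h1 : (1:ℝ) ∈ C)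
    (hvol : volume C = 0) (hL : L = Set.Ioo (0 : ℝ) 1 \ C) :
    frontier L = C := by
  have hLopen : IsOpen L := hL ▸ (isOpen_Ioo.sdiff hCc.isClosed)
  rw [hLopen.frontier_eq]
  apply Set.Subset.antisymm
  · intro x hx
    have hx1 : x ∈ Set.Icc (0:ℝ) 1 := by
      have : closure L ⊆ Set.Icc 0 1 := by
        rw [← closure_Ioo (one_ne_zero).symm]
        exact closure_mono (by rw [hL]; exact Set.diff_subset)
      exact this hx.1
    by_contra hxC
    rcases hx1.1.lt_or_eq with hgt | heq
    · rcases hx1.2.lt_or_eq with hlt | heq1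
      · exact hx.2 (by rw [hL]; exact ⟨⟨hgt, hlt⟩, hxC⟩)
      · exact hxC (heq1 ▸ h1)
    · exact hxC (heq ▸ h0)
  · intro x hxC
    have hxI : x ∈ Set.Icc (0:ℝ) 1 := hsub hxC
    constructor
    · rw [_root_.mem_closure_iff]
      intro o ho hxo
      obtain ⟨δ, hδ, hball⟩ := Metric.isOpen_iff.1 ho x hxo
      set a := max 0 (x - δ) with ha
      set b := min 1 (x + δ) with hb
      have hab : a < b := by
        simp only [ha, hb, lt_min_iff, max_lt_iff]
        refine ⟨⟨?_,?_⟩,?_,?_⟩ <;> linarith [hxI.1, hxI.2]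
      have hIvol : volume (Set.Ioo a b) ≠ 0 := by
        rw [Real.volume_Ioo]
        simp only [ne_eq, ENNReal.ofReal_eq_zero, not_le]
        linarith
      have hne : (Set.Ioo a b \ C).Nonempty := by
        by_contra hemp
        rw [Set.not_nonempty_iff_eq_empty, Set.diff_eq_empty] at hemp
        exact hIvol (measure_mono_null hemp hvol)
      obtain ⟨y, hyI, hyC⟩ := hne
      refine ⟨y, hball ?_, ?_⟩
      · rw [Metric.mem_ball, Real.dist_eq, abs_lt]
        constructor
        · have := hyI.1; have : max 0 (x - δ) ≥ x - δ := le_max_right _ _; linarith [hyI.1]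
        · have := hyI.2; have : min 1 (x + δ) ≤ x + δ := min_le_right _ _; linarith [hyI.2]
      · rw [hL]
        refine ⟨⟨?_, ?_⟩, hyC⟩
        · exact lt_of_le_of_lt (le_max_left 0 (x - δ)) hyI.1
        · exact lt_of_lt_of_le hyI.2 (min_le_left 1 (x + δ))
    · rw [hL]; intro hxL; exact hxL.2 hxC

lemma vol_L {C L : Set ℝ} (hvol : volume C = 0) (hL : L = Set.Ioo (0 : ℝ) 1 \ C) :
    volume L = 1 := by
  rw [hL, measure_diff_null hvol, Real.volume_Ioo]
  norm_num



section InfDist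
variable {C : Set ℝ} (hCne : C.Nonempty) (hCc : IsCompact C)
  (hsub : C ⊆ Set.Icc 0 1) (h0 : (0:ℝ) ∈ C) (h1 : (1:ℝ) ∈ C)
  (hdiv3 : ∀ y ∈ C, y/3 ∈ C) (hdiv3' : ∀ y ∈ C, y/3 + 2/3 ∈ C)
  (hmul3 : ∀ x ∈ C, x ≤ 1/3 → 3*x ∈ C) (hmul3' : ∀ x ∈ C, 2/3 ≤ x → 3*x - 2 ∈ C)
  (hgap : ∀ x ∈ C, x ≤ 1/3 ∨ 2/3 ≤ x)

include hCne hCc hsub h0 h1 hdiv3 hdiv3' hmul3 hmul3' hgap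

lemma infDist_left : ∀ x ∈ Set.Icc (0:ℝ) (1/3), infDist x C = infDist (3*x) C / 3 := by
  intro x hx
  apply le_antisymm
  · obtain ⟨c, hcC, hc⟩ := hCc.exists_infDist_eq_dist hCne (3*x)
    rw [hc]
    have hd : dist x (c/3) = dist (3*x) c / 3 := by
      rw [Real.dist_eq, Real.dist_eq]
      have : x - c/3 = (3*x - c)/3 := by ring
      rw [this, abs_div, abs_of_nonneg (by norm_num : (0:ℝ) ≤ 3)]
    calc infDist x C ≤ dist x (c/3) := infDist_le_dist_of_mem (hdiv3 c hcC)
      _ = dist (3*x) c / 3 := hd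
  · obtain ⟨c, hcC, hc⟩ := hCc.exists_infDist_eq_dist hCne x
    rw [hc]
    rw [div_le_iff₀ (by norm_num : (0:ℝ) < 3)]
    rcases hgap c hcC with hcl | hcr
    · have h3c : 3*c ∈ C := hmul3 c hcC hcl
      calc infDist (3*x) C ≤ dist (3*x) (3*c) := infDist_le_dist_of_mem h3c
        _ = dist x c * 3 := by rw [Real.dist_eq, Real.dist_eq]
                               rw [show 3*x - 3*c = 3*(x-c) by ring, abs_mul]
                               rw [abs_of_nonneg (by norm_num : (0:ℝ) ≤ 3)]; ring
    · have hdist : 1/3 ≤ dist x c := by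
        rw [Real.dist_eq, abs_sub_comm]
        calc (1:ℝ)/3 ≤ c - x := by linarith [hx.2]
          _ ≤ |c - x| := le_abs_self _
      calc infDist (3*x) C ≤ dist (3*x) 1 := infDist_le_dist_of_mem h1
        _ ≤ 1 := by rw [Real.dist_eq, abs_le]; constructor <;> linarith [hx.1, hx.2]
        _ ≤ dist x c * 3 := by linarith

lemma infDist_right : ∀ x ∈ Set.Icc (2/3:ℝ) 1, infDist x C = infDist (3*x - 2) C / 3 := by
  intro x hx
  apply le_antisymm
  · obtain ⟨c, hcC, hc⟩ := hCc.exists_infDist_eq_dist hCne (3*x - 2)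
    rw [hc]
    have hd : dist x (c/3 + 2/3) = dist (3*x - 2) c / 3 := by
      rw [Real.dist_eq, Real.dist_eq]
      have : x - (c/3 + 2/3) = (3*x - 2 - c)/3 := by ring
      rw [this, abs_div, abs_of_nonneg (by norm_num : (0:ℝ) ≤ 3)]
    calc infDist x C ≤ dist x (c/3 + 2/3) := infDist_le_dist_of_mem (hdiv3' c hcC)
      _ = dist (3*x - 2) c / 3 := hd
  · obtain ⟨c, hcC, hc⟩ := hCc.exists_infDist_eq_dist hCne x
    rw [hc]
    rw [div_le_iff₀ (by norm_num : (0:ℝ) < 3)]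
    rcases hgap c hcC with hcl | hcr
    · have hdist : 1/3 ≤ dist x c := by
        rw [Real.dist_eq]
        calc (1:ℝ)/3 ≤ x - c := by linarith [hx.1]
          _ ≤ |x - c| := le_abs_self _
      calc infDist (3*x - 2) C ≤ dist (3*x - 2) 0 := infDist_le_dist_of_mem h0
        _ ≤ 1 := by rw [Real.dist_eq, abs_le]; constructor <;> linarith [hx.1, hx.2]
        _ ≤ dist x c * 3 := by linarith
    · have h3c : 3*c - 2 ∈ C := hmul3' c hcC hcr
      calc infDist (3*x - 2) C ≤ dist (3*x - 2) (3*c - 2) := infDist_le_dist_of_mem h3c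
        _ = dist x c * 3 := by rw [Real.dist_eq, Real.dist_eq]
                               rw [show 3*x - 2 - (3*c - 2) = 3*(x-c) by ring, abs_mul]
                               rw [abs_of_nonneg (by norm_num : (0:ℝ) ≤ 3)]; ring

lemma infDist_mid : ∀ x ∈ Set.Icc (1/3:ℝ) (2/3), infDist x C = min (x - 1/3) (2/3 - x) := by
  intro x hx
  have h13 : (1:ℝ)/3 ∈ C := by have := hdiv3 1 h1; norm_num at this ⊢; exact this
  have h23 : (2:ℝ)/3 ∈ C := by have := hdiv3' 0 h0; norm_num at this ⊢; exact this
  apply le_antisymm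
  · apply le_min
    · calc infDist x C ≤ dist x (1/3) := infDist_le_dist_of_mem h13
        _ = x - 1/3 := by rw [Real.dist_eq, abs_of_nonneg (by linarith [hx.1])]
    · calc infDist x C ≤ dist x (2/3) := infDist_le_dist_of_mem h23
        _ = 2/3 - x := by rw [Real.dist_eq, abs_of_nonpos (by linarith [hx.2])]; ring
  · obtain ⟨c, hcC, hc⟩ := hCc.exists_infDist_eq_dist hCne x
    rw [hc]
    rcases hgap c hcC with hcl | hcr
    · calc min (x - 1/3) (2/3 - x) ≤ x - 1/3 := min_le_left _ _
        _ ≤ x - c := by linarith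
        _ ≤ |x - c| := le_abs_self _
        _ = dist x c := (Real.dist_eq x c).symm
    · calc min (x - 1/3) (2/3 - x) ≤ 2/3 - x := min_le_right _ _
        _ ≤ c - x := by linarith
        _ ≤ |c - x| := le_abs_self _
        _ = dist x c := by rw [Real.dist_eq, abs_sub_comm]

lemma infDist_bound : ∀ x ∈ Set.Icc (0:ℝ) 1, infDist x C ≤ 1/6 := by
  have key : ∀ k : ℕ, ∀ x ∈ Set.Icc (0:ℝ) 1, infDist x C ≤ 1/6 + (1/3)^k := by
    intro k
    induction k with
    | zero =>
      intro x hx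
      calc infDist x C ≤ dist x 0 := infDist_le_dist_of_mem h0
        _ ≤ 1 := by rw [Real.dist_eq, abs_le]; constructor <;> linarith [hx.1, hx.2]
        _ ≤ 1/6 + (1/3)^0 := by norm_num
    | succ k ih =>
      intro x hx
      rcases le_total x (1/3) with hx13 | hx13
      · rw [infDist_left hCne hCc hsub h0 h1 hdiv3 hdiv3' hmul3 hmul3' hgap x ⟨hx.1, hx13⟩]
        have h3x : 3*x ∈ Set.Icc (0:ℝ) 1 := ⟨by linarith [hx.1], by linarith⟩
        have := ih (3*x) h3x
        rw [div_le_iff₀ (by norm_num : (0:ℝ) < 3)]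
        calc infDist (3*x) C ≤ 1/6 + (1/3)^k := this
          _ ≤ (1/6 + (1/3)^(k+1)) * 3 := by rw [pow_succ]; ring_nf; nlinarith [pow_pos (by norm_num : (0:ℝ) < 1/3) k]
      rcases le_total x (2/3) with hx23 | hx23
      · rw [infDist_mid hCne hCc hsub h0 h1 hdiv3 hdiv3' hmul3 hmul3' hgap x ⟨hx13, hx23⟩]
        have hpow : (0:ℝ) < (1/3)^(k+1) := pow_pos (by norm_num) _
        rcases le_total x (1/2) with hx12 | hx12
        · calc min (x - 1/3) (2/3 - x) ≤ x - 1/3 := min_le_left _ _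
            _ ≤ 1/6 + (1/3)^(k+1) := by linarith
        · calc min (x - 1/3) (2/3 - x) ≤ 2/3 - x := min_le_right _ _
            _ ≤ 1/6 + (1/3)^(k+1) := by linarith
      · rw [infDist_right hCne hCc hsub h0 h1 hdiv3 hdiv3' hmul3 hmul3' hgap x ⟨hx23, hx.2⟩]
        have h3x : 3*x - 2 ∈ Set.Icc (0:ℝ) 1 := ⟨by linarith, by linarith [hx.2]⟩
        have := ih (3*x - 2) h3x
        rw [div_le_iff₀ (by norm_num : (0:ℝ) < 3)]
        calc infDist (3*x - 2) C ≤ 1/6 + (1/3)^k := this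
          _ ≤ (1/6 + (1/3)^(k+1)) * 3 := by rw [pow_succ]; ring_nf; nlinarith [pow_pos (by norm_num : (0:ℝ) < 1/3) k]
  intro x hx
  by_contra hlt
  push_neg at hlt
  obtain ⟨k, hk⟩ := exists_pow_lt_of_lt_one (by linarith : (0:ℝ) < infDist x C - 1/6) (by norm_num : (1:ℝ)/3 < 1)
  have := key k x hx
  linarith

end InfDist



section VolRec
variable {C L : Set ℝ} (hCne : C.Nonempty) (hCc : IsCompact C)
  (hsub : C ⊆ Set.Icc 0 1) (h0 : (0:ℝ) ∈ C) (h1 : (1:ℝ) ∈ C)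
  (hdiv3 : ∀ y ∈ C, y/3 ∈ C) (hdiv3' : ∀ y ∈ C, y/3 + 2/3 ∈ C)
  (hmul3 : ∀ x ∈ C, x ≤ 1/3 → 3*x ∈ C) (hmul3' : ∀ x ∈ C, 2/3 ≤ x → 3*x - 2 ∈ C)
  (hgap : ∀ x ∈ C, x ≤ 1/3 ∨ 2/3 ≤ x)
  (hIDl : ∀ x ∈ Set.Icc (0:ℝ) (1/3), infDist x C = infDist (3*x) C / 3)
  (hIDr : ∀ x ∈ Set.Icc (2/3:ℝ) 1, infDist x C = infDist (3*x - 2) C / 3)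
  (hIDm : ∀ x ∈ Set.Icc (1/3:ℝ) (2/3), infDist x C = min (x - 1/3) (2/3 - x))
  (hIDb : ∀ x ∈ Set.Icc (0:ℝ) 1, infDist x C ≤ 1/6)
  (hL : L = Set.Ioo (0 : ℝ) 1 \ C) (hvolL : volume L = 1)

omit hCne hsub h0 h1 hdiv3 hdiv3' hmul3 hmul3' hgap hIDl hIDr hIDm

include hCc hL

lemma A_meas : ∀ ε : ℝ, MeasurableSet {x ∈ L | infDist x C ≤ ε} := by
  intro ε
  have : {x ∈ L | infDist x C ≤ ε} = L ∩ {x | infDist x C ≤ ε} := rfl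
  rw [this]
  exact ((hL ▸ (isOpen_Ioo.sdiff hCc.isClosed) : IsOpen L).measurableSet).inter
    ((isClosed_le (continuous_infDist_pt C) continuous_const).measurableSet)

omit hCc in
include hIDb hvolL in

lemma A_full : ∀ ε : ℝ, 1/6 ≤ ε → volume {x ∈ L | infDist x C ≤ ε} = 1 := by
  intro ε hε
  have : {x ∈ L | infDist x C ≤ ε} = L := by
    apply Set.Subset.antisymm (fun x hx => hx.1)
    intro x hx
    refine ⟨hx, ?_⟩
    have hxI : x ∈ Set.Icc (0:ℝ) 1 := by
      rw [hL] at hx; exact ⟨hx.1.1.le, hx.1.2.le⟩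
    exact le_trans (hIDb x hxI) hε
  rw [this, hvolL]

include hCne hsub h0 h1 hdiv3 hdiv3' hmul3 hmul3' hgap hIDl hIDr hIDm

lemma vol_rec : ∀ ε : ℝ, 0 < ε → ε ≤ 1/6 →
    volume {x ∈ L | infDist x C ≤ ε}
      = ENNReal.ofReal (2*ε) + ENNReal.ofReal (2/3) * volume {x ∈ L | infDist x C ≤ 3*ε} := by
  intro ε hε hε6
  set A := {x ∈ L | infDist x C ≤ ε} with hA
  set B := {x ∈ L | infDist x C ≤ 3*ε} with hB
  have hLIoo : L ⊆ Set.Ioo 0 1 := by rw [hL]; exact Set.diff_subset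
  have hmemL : ∀ x, x ∈ Set.Ioo (0:ℝ) 1 → x ∉ C → x ∈ L := by
    intro x hx hxC; rw [hL]; exact ⟨hx, hxC⟩
  have hnotmemL : ∀ x, x ∈ C → x ∉ L := by
    intro x hx hxL; rw [hL] at hxL; exact hxL.2 hx
  have h13 : (1:ℝ)/3 ∈ C := by have := hdiv3 1 h1; norm_num at this ⊢; exact this
  have h23 : (2:ℝ)/3 ∈ C := by have := hdiv3' 0 h0; norm_num at this ⊢; exact this
  -- A₁
  have hA1 : A ∩ Set.Ioo 0 (1/3) = (fun y : ℝ => y/3) '' B := by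
    ext x
    constructor
    · rintro ⟨⟨hxL, hxd⟩, hxI⟩
      refine ⟨3*x, ⟨?_, ?_⟩, by dsimp; ring⟩
      · apply hmemL
        · exact ⟨by linarith [hxI.1], by linarith [hxI.2]⟩
        · intro hc
          have hxC : x ∈ C := by
            have := hdiv3 _ hc
            rwa [show (3*x)/3 = x by ring] at this
          exact (hnotmemL x hxC) hxL
      · have := hIDl x ⟨hxI.1.le, hxI.2.le⟩
        rw [this] at hxd
        linarith
    · rintro ⟨y, ⟨hyL, hyd⟩, rfl⟩
      have hyI := hLIoo hyL
      have hxI : y/3 ∈ Set.Ioo (0:ℝ) (1/3) := ⟨by linarith [hyI.1], by linarith [hyI.2]⟩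
      have hyCn : y ∉ C := by rw [hL] at hyL; exact hyL.2
      refine ⟨⟨hmemL _ ⟨by linarith [hyI.1], by linarith [hyI.2]⟩ ?_, ?_⟩, hxI⟩
      · intro hc
        have h' := hmul3 _ hc (by linarith [hyI.2] : y/3 ≤ 1/3)
        rw [show 3*(y/3) = y by ring] at h'
        exact hyCn h'
      · have := hIDl (y/3) ⟨by linarith [hyI.1], by linarith [hyI.2]⟩
        have h3 : 3*(y/3) = y := by ring
        rw [h3] at this
        rw [this]
        linarith
  -- A₃
  have hA3 : A ∩ Set.Ioo (2/3) 1 = (fun y : ℝ => y/3 + 2/3) '' B := by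
    ext x
    constructor
    · rintro ⟨⟨hxL, hxd⟩, hxI⟩
      refine ⟨3*x - 2, ⟨?_, ?_⟩, by dsimp; ring⟩
      · apply hmemL
        · exact ⟨by linarith [hxI.1], by linarith [hxI.2]⟩
        · intro hc
          have hxC : x ∈ C := by
            have := hdiv3' _ hc
            rwa [show (3*x - 2)/3 + 2/3 = x by ring] at this
          exact (hnotmemL x hxC) hxL
      · have := hIDr x ⟨hxI.1.le, hxI.2.le⟩
        rw [this] at hxd
        linarith
    · rintro ⟨y, ⟨hyL, hyd⟩, rfl⟩
      have hyI := hLIoo hyL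
      have hyCn : y ∉ C := by rw [hL] at hyL; exact hyL.2
      refine ⟨⟨hmemL _ ⟨by linarith [hyI.1], by linarith [hyI.2]⟩ ?_, ?_⟩,
        ⟨by linarith [hyI.1], by linarith [hyI.2]⟩⟩
      · intro hc
        have h' := hmul3' _ hc (by linarith [hyI.1] : 2/3 ≤ y/3 + 2/3)
        rw [show 3*(y/3 + 2/3) - 2 = y by ring] at h'
        exact hyCn h'
      · have := hIDr (y/3 + 2/3) ⟨by linarith [hyI.1], by linarith [hyI.2]⟩
        have h3 : 3*(y/3 + 2/3) - 2 = y := by ring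
        rw [h3] at this
        rw [this]
        linarith
  -- A₂
  have hA2 : A ∩ Set.Ioo (1/3) (2/3) = Set.Ioo (1/3:ℝ) (2/3) \ Set.Ioo (1/3 + ε) (2/3 - ε) := by
    ext x
    constructor
    · rintro ⟨⟨hxL, hxd⟩, hxI⟩
      refine ⟨hxI, ?_⟩
      intro hxI2
      have := hIDm x ⟨hxI.1.le, hxI.2.le⟩
      rw [this] at hxd
      rcases min_le_iff.1 hxd with h | h
      · linarith [hxI2.1]
      · linarith [hxI2.2]
    · rintro ⟨hxI, hxn⟩
      have hxC : x ∉ C := by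
        intro hc
        rcases hgap x hc with h | h
        · linarith [hxI.1]
        · linarith [hxI.2]
      refine ⟨⟨hmemL x ⟨by linarith [hxI.1], by linarith [hxI.2]⟩ hxC, ?_⟩, hxI⟩
      rw [hIDm x ⟨hxI.1.le, hxI.2.le⟩]
      by_contra hgt
      push_neg at hgt
      rw [lt_min_iff] at hgt
      exact hxn ⟨by linarith [hgt.1], by linarith [hgt.2]⟩
  -- decomposition
  have hdecomp : A = (A ∩ Set.Ioo 0 (1/3)) ∪ (A ∩ Set.Ioo (1/3) (2/3)) ∪ (A ∩ Set.Ioo (2/3) 1) := by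
    apply Set.Subset.antisymm
    · intro x hx
      have hxI := hLIoo hx.1
      have hx13 : x ≠ 1/3 := fun h => hnotmemL x (h ▸ h13) hx.1
      have hx23 : x ≠ 2/3 := fun h => hnotmemL x (h ▸ h23) hx.1
      rcases lt_trichotomy x (1/3) with h | h | h
      · exact Or.inl (Or.inl ⟨hx, hxI.1, h⟩)
      · exact absurd h hx13
      rcases lt_trichotomy x (2/3) with h2 | h2 | h2
      · exact Or.inl (Or.inr ⟨hx, h, h2⟩)
      · exact absurd h2 hx23
      · exact Or.inr ⟨hx, h2, hxI.2⟩
    · intro x hx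
      rcases hx with (h | h) | h <;> exact h.1
  have hAmeas := A_meas (C := C) (L := L) hCc hL
  have hBsmul : (fun y : ℝ => y/3) '' B = (3⁻¹ : ℝ) • B := by
    ext x; simp [Set.mem_smul_set, div_eq_inv_mul, eq_comm]
  have hBsmul' : (fun y : ℝ => y/3 + 2/3) '' B = (2/3 : ℝ) +ᵥ ((3⁻¹ : ℝ) • B) := by
    rw [← hBsmul]; ext x
    simp only [Set.mem_vadd_set, Set.mem_image, vadd_eq_add]
    constructor
    · rintro ⟨y, hy, rfl⟩; exact ⟨y/3, ⟨y, hy, rfl⟩, by ring⟩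
    · rintro ⟨z, ⟨y, hy, rfl⟩, rfl⟩; exact ⟨y, hy, by ring⟩
  have hvol1 : volume (A ∩ Set.Ioo 0 (1/3)) = ENNReal.ofReal (1/3) * volume B := by
    rw [hA1, hBsmul, Measure.addHaar_smul_of_nonneg volume (by norm_num : (0:ℝ) ≤ 3⁻¹) B]
    norm_num
  have hvol3 : volume (A ∩ Set.Ioo (2/3) 1) = ENNReal.ofReal (1/3) * volume B := by
    rw [hA3, hBsmul', measure_vadd,
      Measure.addHaar_smul_of_nonneg volume (by norm_num : (0:ℝ) ≤ 3⁻¹) B]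
    norm_num
  have hvol2 : volume (A ∩ Set.Ioo (1/3) (2/3)) = ENNReal.ofReal (2*ε) := by
    rw [hA2, measure_diff (Set.Ioo_subset_Ioo (by linarith) (by linarith))
      measurableSet_Ioo.nullMeasurableSet measure_Ioo_lt_top.ne, Real.volume_Ioo, Real.volume_Ioo]
    rw [← ENNReal.ofReal_sub _ (by linarith : (0:ℝ) ≤ 2/3 - ε - (1/3 + ε))]
    congr 1
    ring
  -- disjointness
  have hd12 : Disjoint (A ∩ Set.Ioo (0:ℝ) (1/3)) (A ∩ Set.Ioo (1/3) (2/3)) := by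
    apply Set.disjoint_left.2
    rintro x ⟨_, hx1⟩ ⟨_, hx2⟩
    linarith [hx1.2, hx2.1]
  have hd123 : Disjoint ((A ∩ Set.Ioo (0:ℝ) (1/3)) ∪ (A ∩ Set.Ioo (1/3) (2/3)))
      (A ∩ Set.Ioo (2/3) 1) := by
    apply Set.disjoint_left.2
    rintro x (⟨_, hx1⟩ | ⟨_, hx1⟩) ⟨_, hx2⟩
    · linarith [hx1.2, hx2.1]
    · linarith [hx1.2, hx2.1]
  have hm1 : MeasurableSet (A ∩ Set.Ioo (0:ℝ) (1/3)) := (hAmeas ε).inter measurableSet_Ioo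
  have hm2 : MeasurableSet (A ∩ Set.Ioo (1/3:ℝ) (2/3)) := (hAmeas ε).inter measurableSet_Ioo
  have hm3 : MeasurableSet (A ∩ Set.Ioo (2/3:ℝ) 1) := (hAmeas ε).inter measurableSet_Ioo
  calc volume A = volume ((A ∩ Set.Ioo 0 (1/3)) ∪ (A ∩ Set.Ioo (1/3) (2/3)) ∪ (A ∩ Set.Ioo (2/3) 1)) := by rw [← hdecomp]
    _ = volume ((A ∩ Set.Ioo 0 (1/3)) ∪ (A ∩ Set.Ioo (1/3) (2/3))) + volume (A ∩ Set.Ioo (2/3) 1) := measure_union hd123 hm3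
    _ = volume (A ∩ Set.Ioo 0 (1/3)) + volume (A ∩ Set.Ioo (1/3) (2/3)) + volume (A ∩ Set.Ioo (2/3) 1) := by rw [measure_union hd12 hm2]
    _ = ENNReal.ofReal (2*ε) + ENNReal.ofReal (2/3) * volume B := by
        rw [hvol1, hvol2, hvol3]
        rw [show ENNReal.ofReal (2/3 : ℝ) = ENNReal.ofReal (1/3) + ENNReal.ofReal (1/3) by
          rw [← ENNReal.ofReal_add (by norm_num) (by norm_num)]; norm_num]
        ring
end VolRec



lemma W_closed {C L : Set ℝ}
    (hrec : ∀ ε : ℝ, 0 < ε → ε ≤ 1/6 →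
      volume {x ∈ L | infDist x C ≤ ε}
        = ENNReal.ofReal (2*ε) + ENNReal.ofReal (2/3) * volume {x ∈ L | infDist x C ≤ 3*ε})
    (hfull : ∀ ε : ℝ, 1/6 ≤ ε → volume {x ∈ L | infDist x C ≤ ε} = 1) :
    ∀ k : ℕ, 1 ≤ k → ∀ ε : ℝ, (1/3:ℝ)^(k+1) < 2*ε → 2*ε ≤ (1/3)^k →
      volume {x ∈ L | infDist x C ≤ ε}
        = ENNReal.ofReal (2*ε*(2^k - 1) + (2/3)^k) := by
  intro k
  induction k with
  | zero => omega
  | succ k ih =>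
    intro _ ε hlo hhi
    have hε : 0 < ε := by nlinarith [pow_pos (by norm_num : (0:ℝ) < 1/3) (k+2)]
    have hε6 : ε ≤ 1/6 := by
      have h31 : (1/3:ℝ)^(k+1) ≤ (1/3)^1 :=
        pow_le_pow_of_le_one (by norm_num) (by norm_num) (by omega)
      rw [pow_one] at h31
      linarith
    rw [hrec ε hε hε6]
    rcases Nat.eq_zero_or_pos k with hk0 | hkpos
    · subst hk0
      have h36 : 1/6 ≤ 3*ε := by
        have : (1/3:ℝ)^2 < 2*ε := by norm_num at hlo ⊢; linarith
        norm_num at this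
        linarith
      rw [hfull (3*ε) h36, mul_one, ← ENNReal.ofReal_add (by linarith) (by norm_num)]
      congr 1
      norm_num
    · have h1k : 1 ≤ k := hkpos
      have hlo' : (1/3:ℝ)^(k+1) < 2*(3*ε) := by
        have h3 : (3:ℝ) * (1/3)^(k+2) = (1/3)^(k+1) := by
          rw [pow_succ]; ring
        nlinarith
      have hhi' : 2*(3*ε) ≤ (1/3:ℝ)^k := by
        have h3 : (3:ℝ) * (1/3)^(k+1) = (1/3)^k := by
          rw [pow_succ]; ring
        nlinarith
      rw [ih h1k (3*ε) hlo' hhi']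
      have hnn : (0:ℝ) ≤ 2*(3*ε)*(2^k - 1) + (2/3)^k := by
        have : (1:ℝ) ≤ 2^k := one_le_pow₀ (by norm_num : (1:ℝ) ≤ 2)
        have := pow_pos (by norm_num : (0:ℝ) < 2/3) k
        nlinarith
      rw [← ENNReal.ofReal_mul (by norm_num : (0:ℝ) ≤ 2/3),
        ← ENNReal.ofReal_add (by linarith) (by positivity)]
      congr 1
      rw [pow_succ, pow_succ]
      ring



noncomputable section

namespace CantorAux

def TT : ℝ := Real.log 3
def DD : ℝ := Real.log 2 / Real.log 3

lemma hT : 0 < TT := Real.log_pos (by norm_num)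
lemma hDT : DD * TT = Real.log 2 := by
  rw [DD, TT, div_mul_cancel₀]
  exact (Real.log_pos (by norm_num)).ne'
lemma hD0 : 0 < DD := div_pos (Real.log_pos (by norm_num)) (Real.log_pos (by norm_num))
lemma hD1 : DD < 1 := by
  rw [DD, div_lt_one (Real.log_pos (by norm_num))]
  exact Real.log_lt_log (by norm_num) (by norm_num)

/-- The function whose Fourier series we compute. -/
def H : ℝ → ℂ := fun t =>
  2*(TT:ℂ)*Complex.exp (-(DD:ℂ) * (t:ℂ)) + 2*(TT:ℂ)*Complex.exp ((1-(DD:ℂ)) * (t:ℂ))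

lemma expDT : Complex.exp (-(DD:ℂ) * (TT:ℂ)) = 1/2 := by
  rw [show -(DD:ℂ) * (TT:ℂ) = ((-(DD*TT) : ℝ) : ℂ) by push_cast; ring]
  rw [← Complex.ofReal_exp, hDT, Real.exp_neg, Real.exp_log (by norm_num : (0:ℝ) < 2)]
  norm_num

lemma expDT' : Complex.exp ((1-(DD:ℂ)) * (TT:ℂ)) = 3/2 := by
  rw [show (1-(DD:ℂ)) * (TT:ℂ) = ((TT - DD*TT : ℝ) : ℂ) by push_cast; ring]
  rw [← Complex.ofReal_exp, hDT, TT, Real.exp_sub,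
    Real.exp_log (by norm_num : (0:ℝ) < 3), Real.exp_log (by norm_num : (0:ℝ) < 2)]
  norm_num

lemma H_periodic : H 0 = H (0 + TT) := by
  rw [H, H]
  push_cast
  rw [zero_add, expDT, expDT']
  simp [mul_zero, Complex.exp_zero]
  ring

lemma H_contOn : ContinuousOn H (Set.Icc 0 (0 + TT)) := by
  apply Continuous.continuousOn
  unfold H
  fun_prop

instance : Fact (0 < TT) := ⟨hT⟩

def F : C(AddCircle TT, ℂ) :=
  ⟨AddCircle.liftIco TT 0 H, AddCircle.liftIco_continuous H_periodic H_contOn⟩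

lemma F_coeff (n : ℤ) : fourierCoeff (⇑F) n
    = 1/((DD:ℂ) + Complex.I*n*((2*π/TT : ℝ):ℂ))
      + 1/(1 - (DD:ℂ) - Complex.I*n*((2*π/TT : ℝ):ℂ)) := by
  have hTne : (TT:ℂ) ≠ 0 := Complex.ofReal_ne_zero.mpr hT.ne'
  set w : ℂ := 2*(π:ℂ)*Complex.I*n/(TT:ℂ) with hw
  have hw2 : w = ((2*π*(n:ℝ)/TT : ℝ):ℂ)*Complex.I := by rw [hw]; push_cast; ring
  have hwre : w.re = 0 := by rw [hw2]; simp
  have hc1 : (-(DD:ℂ) - w) ≠ 0 := by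
    intro h
    have := congrArg Complex.re h
    simp only [Complex.sub_re, Complex.neg_re, Complex.ofReal_re, hwre, Complex.zero_re] at this
    have : DD = 0 := by linarith
    exact hD0.ne' this
  have hc2 : ((1:ℂ)-(DD:ℂ) - w) ≠ 0 := by
    intro h
    have := congrArg Complex.re h
    simp only [Complex.sub_re, Complex.one_re, Complex.ofReal_re, hwre, Complex.zero_re] at this
    have : DD = 1 := by linarith
    exact hD1.ne this
  have hstep : fourierCoeff (⇑F) n = fourierCoeffOn (lt_add_of_pos_right 0 hT) H n :=
    fourierCoeff_liftIco_eq H n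
  rw [hstep, fourierCoeffOn_eq_integral]
  rw [show (0:ℝ)+TT-0 = TT by ring]
  rw [show (0:ℝ)+TT = TT by ring]
  have key : Set.EqOn (fun x : ℝ => (fourier (-n) (x : AddCircle TT) : ℂ) • H x)
      (fun x : ℝ => 2*(TT:ℂ)*Complex.exp ((-(DD:ℂ) - w) * x)
        + 2*(TT:ℂ)*Complex.exp (((1:ℂ)-(DD:ℂ) - w) * x)) (Set.uIcc (0:ℝ) TT) := by
    intro x _
    dsimp only
    rw [fourier_coe_apply, smul_eq_mul, H]
    rw [show ((-(DD:ℂ) - w) * x) = (2*(π:ℂ)*Complex.I*(-n:ℤ)*x/TT) + (-(DD:ℂ)*x) by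
        rw [hw]; push_cast; ring,
      show (((1:ℂ)-(DD:ℂ) - w) * x) = (2*(π:ℂ)*Complex.I*(-n:ℤ)*x/TT) + ((1-(DD:ℂ))*x) by
        rw [hw]; push_cast; ring,
      Complex.exp_add, Complex.exp_add]
    push_cast
    ring
  rw [intervalIntegral.integral_congr key]
  have int1 : IntervalIntegrable (fun x : ℝ => 2*(TT:ℂ)*Complex.exp ((-(DD:ℂ) - w) * x))
      volume 0 TT :=
    (continuous_const.mul
      (Complex.continuous_exp.comp (continuous_const.mul Complex.continuous_ofReal))).intervalIntegrable _ _
  have int2 : IntervalIntegrable (fun x : ℝ => 2*(TT:ℂ)*Complex.exp (((1:ℂ)-(DD:ℂ) - w) * x))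
      volume 0 TT :=
    (continuous_const.mul
      (Complex.continuous_exp.comp (continuous_const.mul Complex.continuous_ofReal))).intervalIntegrable _ _
  rw [intervalIntegral.integral_add int1 int2,
    intervalIntegral.integral_const_mul, intervalIntegral.integral_const_mul,
    integral_exp_mul_complex hc1, integral_exp_mul_complex hc2]
  have hwT : w * TT = ((-n : ℤ):ℂ) * (2*(π:ℂ)*Complex.I) * (-1) := by
    rw [hw]; field_simp; push_cast; ring
  have e1T : Complex.exp ((-(DD:ℂ) - w) * TT) = 1/2 := by
    rw [show (-(DD:ℂ) - w) * TT = -(DD:ℂ)*(TT:ℂ) + (((-n : ℤ):ℂ) * (2*(π:ℂ)*Complex.I)) by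
        rw [sub_mul, hwT]; ring,
      Complex.exp_add, Complex.exp_int_mul_two_pi_mul_I, expDT, mul_one]
  have e2T : Complex.exp (((1:ℂ)-(DD:ℂ) - w) * TT) = 3/2 := by
    rw [show ((1:ℂ)-(DD:ℂ) - w) * TT = (1-(DD:ℂ))*(TT:ℂ) + (((-n : ℤ):ℂ) * (2*(π:ℂ)*Complex.I)) by
        rw [sub_mul, hwT]; ring,
      Complex.exp_add, Complex.exp_int_mul_two_pi_mul_I, expDT', mul_one]
  rw [e1T, e2T]
  simp only [Complex.ofReal_zero, mul_zero, Complex.exp_zero]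
  rw [Complex.real_smul]
  have hwp : Complex.I*(n:ℂ)*((2*π/TT : ℝ):ℂ) = w := by rw [hw]; push_cast; ring
  rw [hwp]
  have hd1 : (DD:ℂ) + w ≠ 0 := by
    intro h; apply hc1; rw [← neg_add']; rw [h]; ring_nf
  push_cast
  field_simp
  ring

lemma denom1_ne (n : ℤ) : ((DD:ℂ) + Complex.I*n*((2*π/TT : ℝ):ℂ)) ≠ 0 := by
  intro h
  have := congrArg Complex.re h
  simp only [Complex.add_re, Complex.ofReal_re, Complex.zero_re] at this
  rw [show Complex.I*(n:ℂ)*((2*π/TT : ℝ):ℂ) = ((((n:ℝ))*(2*π/TT) : ℝ):ℂ)*Complex.I by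
    push_cast; ring] at this
  simp at this
  exact hD0.ne' this
lemma denom2_ne (n : ℤ) : ((1:ℂ) - (DD:ℂ) - Complex.I*n*((2*π/TT : ℝ):ℂ)) ≠ 0 := by
  intro h
  have := congrArg Complex.re h
  simp only [Complex.sub_re, Complex.one_re, Complex.ofReal_re, Complex.zero_re] at this
  rw [show Complex.I*(n:ℂ)*((2*π/TT : ℝ):ℂ) = ((((n:ℝ))*(2*π/TT) : ℝ):ℂ)*Complex.I by
    push_cast; ring] at this
  simp at this
  exact hD1.ne (by linarith)

lemma F_coeff' (n : ℤ) : fourierCoeff (⇑F) n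
    = 1/(((DD:ℂ) + Complex.I*n*((2*π/TT : ℝ):ℂ))
        * ((1:ℂ) - (DD:ℂ) - Complex.I*n*((2*π/TT : ℝ):ℂ))) := by
  rw [F_coeff, div_add_div _ _ (denom1_ne n) (denom2_ne n)]
  congr 1
  ring

lemma p_ge_one : 1 ≤ 2*π/TT := by
  rw [le_div_iff₀ hT, one_mul, TT]
  have h1 : Real.log 3 ≤ 3 - 1 := Real.log_le_sub_one_of_pos (by norm_num)
  have h2 : (3:ℝ) < π := Real.pi_gt_three
  linarith

lemma F_summable : Summable (fourierCoeff (⇑F)) := by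
  set c := fourierCoeff (⇑F) with hc
  have hg : Summable (fun n : ℤ => 1/(n:ℝ)^2 + (if n = 0 then ‖c 0‖ else 0)) :=
    (Real.summable_one_div_int_pow.mpr one_lt_two).add ((hasSum_ite_eq (0:ℤ) _).summable)
  apply Summable.of_norm_bounded hg
  intro n
  by_cases hn : n = 0
  · subst hn
    simp
  · have h1 : (1:ℝ) ≤ |(n:ℝ)| := by
      rw [← Int.cast_abs]
      exact_mod_cast Int.one_le_abs (by omega)
    have hnormim : ∀ z : ℂ, |z.im| ≤ ‖z‖ := fun z => Complex.abs_im_le_norm z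
    set a := (DD:ℂ) + Complex.I*n*((2*π/TT : ℝ):ℂ) with ha
    set b := (1:ℂ) - (DD:ℂ) - Complex.I*n*((2*π/TT : ℝ):ℂ) with hb
    have haim : a.im = (n:ℝ)*(2*π/TT) := by
      rw [ha, show Complex.I*(n:ℂ)*((2*π/TT : ℝ):ℂ) = ((((n:ℝ))*(2*π/TT) : ℝ):ℂ)*Complex.I by
        push_cast; ring]
      simp
    have hbim : b.im = -((n:ℝ)*(2*π/TT)) := by
      rw [hb, show Complex.I*(n:ℂ)*((2*π/TT : ℝ):ℂ) = ((((n:ℝ))*(2*π/TT) : ℝ):ℂ)*Complex.I by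
        push_cast; ring]
      simp
    have hr1 : (1:ℝ) ≤ 2*π/TT := p_ge_one
    have hpa : |(n:ℝ)| ≤ ‖a‖ := by
      calc |(n:ℝ)| = |(n:ℝ)| * 1 := (mul_one _).symm
        _ ≤ |(n:ℝ)| * (2*π/TT) := by
            exact mul_le_mul_of_nonneg_left hr1 (abs_nonneg _)
        _ = |(n:ℝ)*(2*π/TT)| := by
            rw [abs_mul, _root_.abs_of_nonneg (le_trans zero_le_one hr1)]
        _ = |a.im| := by rw [haim]
        _ ≤ ‖a‖ := hnormim a
    have hpb : |(n:ℝ)| ≤ ‖b‖ := by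
      calc |(n:ℝ)| = |(n:ℝ)| * 1 := (mul_one _).symm
        _ ≤ |(n:ℝ)| * (2*π/TT) := by
            exact mul_le_mul_of_nonneg_left hr1 (abs_nonneg _)
        _ = |(n:ℝ)*(2*π/TT)| := by
            rw [abs_mul, _root_.abs_of_nonneg (le_trans zero_le_one hr1)]
        _ = |b.im| := by rw [hbim, abs_neg]
        _ ≤ ‖b‖ := hnormim b
    have h2 : (n:ℝ)^2 ≤ ‖a‖*‖b‖ := by
      have hm := mul_le_mul hpa hpb (abs_nonneg _) (norm_nonneg _)
      calc (n:ℝ)^2 = |(n:ℝ)| * |(n:ℝ)| := by rw [← abs_mul, ← sq, _root_.abs_of_nonneg (sq_nonneg _)]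
        _ ≤ ‖a‖*‖b‖ := hm
    have hpos : (0:ℝ) < (n:ℝ)^2 := by
      have : (n:ℝ) ≠ 0 := Int.cast_ne_zero.mpr hn
      positivity
    rw [hc, F_coeff' n, ← ha, ← hb, norm_div, norm_one, norm_mul, if_neg hn, add_zero]
    exact one_div_le_one_div_of_le hpos h2

lemma hTT : Real.log 3 = TT := rfl
lemma hDDdef : Real.log 2 / Real.log 3 = DD := rfl

lemma cantor_series (D p ε : ℝ) (hD : D = Real.log 2 / Real.log 3)
    (hp : p = 2 * π / Real.log 3) (hε : 0 < ε) (k : ℕ) (hk : 1 ≤ k)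
    (hlo : (1/3:ℝ)^(k+1) < 2*ε) (hhi : 2*ε ≤ (1/3:ℝ)^k) :
    ∃ S : ℂ,
      Filter.Tendsto (fun N : ℕ => ∑ n ∈ Finset.Icc (-(N : ℤ)) (N : ℤ),
          ((1 / ((D : ℂ) + Complex.I * n * p) - 1 / ((D : ℂ) - 1 + Complex.I * n * p))
            * Complex.exp ((1 - (D : ℂ) - Complex.I * n * p) * ((Real.log (6*ε) : ℝ) : ℂ))))
        Filter.atTop (nhds S)
      ∧ S = ((3 * Real.log 3 * (2*ε*2^k + (2/3)^k) : ℝ) : ℂ) := by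
  subst hD hp
  rw [hDDdef, hTT]
  have hTne : (TT:ℂ) ≠ 0 := Complex.ofReal_ne_zero.mpr hT.ne'
  have h6ε : (0:ℝ) < 6*ε := by linarith
  set u := Real.log (6*ε) with hu
  have hexpu : Real.exp u = 6*ε := Real.exp_log h6ε
  set y : ℝ := -u with hy
  have hpow3 : (0:ℝ) < (1/3:ℝ)^k := pow_pos (by norm_num) k
  have hlog1 : Real.log (3*(1/3)^k) = TT - (k:ℝ)*TT := by
    rw [Real.log_mul (by norm_num) hpow3.ne', Real.log_pow,
      show (1/3:ℝ) = 3⁻¹ by norm_num, Real.log_inv, hTT]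
    ring
  have hlog2 : Real.log ((1/3:ℝ)^k) = -((k:ℝ)*TT) := by
    rw [Real.log_pow, show (1/3:ℝ) = 3⁻¹ by norm_num, Real.log_inv, hTT]
    ring
  have hy1 : ((k:ℝ)-1)*TT ≤ y := by
    have h1 : u ≤ TT - (k:ℝ)*TT := by
      rw [← hlog1]
      exact Real.log_le_log h6ε (by linarith)
    rw [hy]
    linarith
  have hy2 : y < (k:ℝ)*TT := by
    have h1 : -((k:ℝ)*TT) < u := by
      rw [← hlog2]
      exact Real.log_lt_log hpow3 (by rw [pow_succ] at hlo; linarith)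
    rw [hy]
    linarith
  set t₀ : ℝ := y - ((k:ℝ)-1)*TT with ht₀
  have ht₀mem : t₀ ∈ Set.Ico (0:ℝ) (0 + TT) := by
    constructor
    · rw [ht₀]; linarith
    · rw [ht₀, zero_add]
      have : ((k:ℝ)-1)*TT + TT = (k:ℝ)*TT := by ring
      linarith
  have hcirc : ((y : ℝ) : AddCircle TT) = ((t₀ : ℝ) : AddCircle TT) := by
    rw [QuotientAddGroup.eq_iff_sub_mem]
    apply AddSubgroup.mem_zmultiples_iff.mpr
    refine ⟨(k:ℤ) - 1, ?_⟩
    rw [zsmul_eq_mul]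
    push_cast
    rw [ht₀]
    ring
  have hFy : F ((y : ℝ) : AddCircle TT) = H t₀ := by
    rw [hcirc]
    show AddCircle.liftIco TT 0 H _ = H t₀
    exact AddCircle.liftIco_coe_apply ht₀mem
  set M : ℂ := Complex.exp ((1-(DD:ℂ)) * (u:ℂ)) with hM
  have hterm : ∀ n : ℤ,
      (1 / ((DD : ℂ) + Complex.I * n * ((2*π/TT : ℝ):ℂ))
        - 1 / ((DD : ℂ) - 1 + Complex.I * n * ((2*π/TT : ℝ):ℂ)))
        * Complex.exp ((1 - (DD : ℂ) - Complex.I * n * ((2*π/TT : ℝ):ℂ)) * (u : ℂ))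
      = M * (fourierCoeff (⇑F) n • fourier n ((y : ℝ) : AddCircle TT)) := by
    intro n
    rw [F_coeff n, fourier_coe_apply, smul_eq_mul]
    rw [show ((1:ℂ) - (DD : ℂ) - Complex.I * n * ((2*π/TT : ℝ):ℂ)) * (u : ℂ)
        = (1-(DD:ℂ)) * (u:ℂ) + (2*(π:ℂ)*Complex.I*n*((y:ℝ):ℂ)/(TT:ℂ)) by
      rw [hy]
      push_cast
      field_simp
      ring]
    rw [Complex.exp_add]
    rw [show (DD : ℂ) - 1 + Complex.I * n * ((2*π/TT : ℝ):ℂ)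
        = -((1:ℂ) - (DD : ℂ) - Complex.I * n * ((2*π/TT : ℝ):ℂ)) by ring]
    rw [div_neg]
    rw [hM]
    ring
  have hsum0 := has_pointwise_sum_fourier_series_of_summable F_summable ((y : ℝ) : AddCircle TT)
  have hsum := hsum0.mul_left M
  refine ⟨M * F ((y : ℝ) : AddCircle TT), ?_, ?_⟩
  · have hIcc : Filter.Tendsto (fun N : ℕ => Finset.Icc (-(N:ℤ)) (N:ℤ))
        Filter.atTop Filter.atTop := by
      apply tendsto_atTop_finset_of_monotone
      · intro a b hab
        apply Finset.Icc_subset_Icc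
        · exact neg_le_neg (by exact_mod_cast hab)
        · exact_mod_cast hab
      · intro n
        refine ⟨n.natAbs, ?_⟩
        rw [Finset.mem_Icc]
        refine ⟨?_, Int.le_natAbs⟩
        rw [neg_le, ← Int.natAbs_neg]
        exact Int.le_natAbs
    have hcomp := (hsum.comp hIcc : Filter.Tendsto _ Filter.atTop _)
    apply hcomp.congr
    intro N
    exact Finset.sum_congr rfl fun n _ => (hterm n).symm
  · rw [hFy]
    have e1 : Real.exp ((1-DD)*u) * Real.exp (-DD*t₀) = 3*ε*2^k := by
      rw [← Real.exp_add,
        show (1-DD)*u + (-DD*t₀) = u + (k:ℝ)*(DD*TT) + (-(DD*TT)) by rw [ht₀, hy]; ring,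
        hDT, Real.exp_add, Real.exp_add, Real.exp_neg, hexpu, Real.exp_nat_mul,
        Real.exp_log (by norm_num : (0:ℝ) < 2)]
      rw [show ((2:ℝ))⁻¹ = 1/2 by norm_num]
      ring
    have e2 : Real.exp ((1-DD)*u) * Real.exp ((1-DD)*t₀) = (3/2)*(2/3)^k := by
      rw [← Real.exp_add,
        show (1-DD)*u + ((1-DD)*t₀) = (k:ℝ)*(DD*TT - TT) + (TT - DD*TT) by rw [ht₀, hy]; ring,
        hDT, ← hTT, Real.exp_add, Real.exp_nat_mul, Real.exp_sub, Real.exp_sub,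
        Real.exp_log (by norm_num : (0:ℝ) < 2), Real.exp_log (by norm_num : (0:ℝ) < 3)]
      norm_num
      ring
    have hMre : M = ((Real.exp ((1-DD)*u) : ℝ) : ℂ) := by
      rw [hM, Complex.ofReal_exp]
      congr 1
      push_cast
      ring
    have hHre : H t₀ = ((2*TT*(Real.exp (-DD*t₀) + Real.exp ((1-DD)*t₀)) : ℝ) : ℂ) := by
      rw [H]
      push_cast [Complex.ofReal_exp]
      ring
    rw [hMre, hHre, ← Complex.ofReal_mul]
    congr 1
    calc Real.exp ((1-DD)*u) * (2*TT*(Real.exp (-DD*t₀) + Real.exp ((1-DD)*t₀)))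
        = 2*TT*(Real.exp ((1-DD)*u) * Real.exp (-DD*t₀)
            + Real.exp ((1-DD)*u) * Real.exp ((1-DD)*t₀)) := by ring
      _ = 2*TT*(3*ε*2^k + (3/2)*(2/3)^k) := by rw [e1, e2]
      _ = 3 * TT * (2*ε*2^k + (2/3)^k) := by ring

end CantorAux
end

open CantorAux in
theorem stmt_5 (C : Set ℝ)
    (hCne : C.Nonempty) (hCc : IsCompact C)
    (hC : C = (fun x : ℝ => x / 3) '' C ∪ (fun x : ℝ => x / 3 + 2 / 3) '' C)
    (L : Set ℝ) (hL : L = Set.Ioo (0 : ℝ) 1 \ C)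
    (D p g : ℝ) (hD : D = Real.log 2 / Real.log 3)
    (hp : p = 2 * Real.pi / Real.log 3) (hg : g = 1 / 6) :
    ∀ ε : ℝ, 0 < ε → ε ≤ 1 / 6 →
      ∃ S : ℂ,
        Tendsto
          (fun N : ℕ => ∑ n ∈ Finset.Icc (-(N : ℤ)) (N : ℤ),
            ((1 / ((D : ℂ) + Complex.I * n * p) - 1 / ((D : ℂ) - 1 + Complex.I * n * p))
              * Complex.exp ((1 - (D : ℂ) - Complex.I * n * p) * (Real.log (ε / g) : ℂ))))
          atTop (nhds S) ∧
        ((volume {x ∈ L | infDist x (frontier L) ≤ ε}).toReal : ℂ)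
          = (1 / (3 * Real.log 3) : ℝ) * S - 2 * (ε : ℂ) := by
  intro ε hε hε6
  -- structural facts about C
  obtain ⟨h1mem, hsub, h0mem⟩ := cantor_basic hCne hCc hC
  have hdiv3 := cantor_div3 hC hsub
  have hdiv3' := cantor_div3' hC hsub
  have hmul3 := cantor_mul3 hC hsub
  have hmul3' := cantor_mul3' hC hsub
  have hgap := cantor_gap hC hsub
  have hvolC := cantor_vol hCc hC
  have hfront := frontier_L hCc hsub h0mem h1mem hvolC hL
  have hvolL := vol_L hvolC hL
  have hIDl := infDist_left hCne hCc hsub h0mem h1mem hdiv3 hdiv3' hmul3 hmul3' hgap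
  have hIDr := infDist_right hCne hCc hsub h0mem h1mem hdiv3 hdiv3' hmul3 hmul3' hgap
  have hIDm := infDist_mid hCne hCc hsub h0mem h1mem hdiv3 hdiv3' hmul3 hmul3' hgap
  have hIDb := infDist_bound hCne hCc hsub h0mem h1mem hdiv3 hdiv3' hmul3 hmul3' hgap
  have hfull := A_full (hIDb := hIDb) (hL := hL) (hvolL := hvolL)
  have hrec := vol_rec (hCne := hCne) (hCc := hCc) (hsub := hsub) (h0 := h0mem) (h1 := h1mem)
    (hdiv3 := hdiv3) (hdiv3' := hdiv3') (hmul3 := hmul3) (hmul3' := hmul3')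
    (hgap := hgap) (hIDl := hIDl) (hIDr := hIDr) (hIDm := hIDm) (hL := hL)
  have hW := W_closed hrec hfull
  -- find the scale k
  have h2ε : (0:ℝ) < 2*ε := by linarith
  have hex : ∃ n : ℕ, (1/3:ℝ)^(n+1) < 2*ε := by
    obtain ⟨n, hn⟩ := exists_pow_lt_of_lt_one h2ε (by norm_num : (1/3:ℝ) < 1)
    refine ⟨n, lt_of_le_of_lt ?_ hn⟩
    exact pow_le_pow_of_le_one (by norm_num) (by norm_num) (by omega)
  set k := Nat.find hex with hkdef
  have hlo : (1/3:ℝ)^(k+1) < 2*ε := Nat.find_spec hex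
  have hk1 : 1 ≤ k := by
    by_contra h
    push_neg at h
    interval_cases k
    · have : (1/3:ℝ)^(0+1) < 2*ε := hlo
      norm_num at this
      linarith
  have hhi : 2*ε ≤ (1/3:ℝ)^k := by
    have := Nat.find_min hex (m := k - 1) (by omega)
    push_neg at this
    have hkk : k - 1 + 1 = k := by omega
    rwa [hkk] at this
  -- the series
  obtain ⟨S, hS1, hS2⟩ := cantor_series D p ε hD hp hε k hk1 hlo hhi
  have hεg : ε / g = 6 * ε := by rw [hg]; ring
  refine ⟨S, ?_, ?_⟩
  · rw [hεg]
    exact hS1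
  · -- volume side
    have hvol : volume {x ∈ L | infDist x (frontier L) ≤ ε}
        = ENNReal.ofReal (2*ε*(2^k - 1) + (2/3)^k) := by
      rw [hfront]
      exact hW k hk1 ε hlo hhi
    have h2k : (1:ℝ) ≤ 2^k := one_le_pow₀ (by norm_num : (1:ℝ) ≤ 2)
    have hval : (0:ℝ) ≤ 2*ε*(2^k - 1) + (2/3)^k := by
      have := pow_pos (by norm_num : (0:ℝ) < 2/3) k
      nlinarith
    rw [hvol, ENNReal.toReal_ofReal hval, hS2]
    have hlog3 : Real.log 3 ≠ 0 := (Real.log_pos (by norm_num)).ne'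
    rw [show ((2:ℂ) * ε) = ((2*ε : ℝ) : ℂ) by push_cast; ring,
      ← Complex.ofReal_mul, ← Complex.ofReal_sub]
    congr 1
    field_simp
    ring
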